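/- Let J ≥ 3 and let C be a type-I quasi-cyclic code with J×L polynomial parity-check matrix H(x) over F_2[x]/(x^r−1), J+1 ≤ L. If there exist distinct rows j1,j2,j3 and distinct columns i1,i2,i3 such that h_{j1,i1}·h_{j2,i2}·h_{j3,i3} = h_{j1,i2}·h_{j2,i3}·h_{j3,i1} ≠ 0 in F_2[x]/(x^r−1) (a 6-cycle condition), then d_min(C) ≤ (J+1)! − 2(J−2)!. -/

import Mathlib

open Matrix BigOperators

noncomputable section

/-- The ring `F₂[x]/(xʳ−1)`, realized as the group algebra of `ℤ/rℤ` over `F₂`.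
    (For `r > 0` this is isomorphic to `F₂[x]/(xʳ−1)`, and the canonical representative
    of degree `< r` corresponds to the `Finsupp` on `ZMod r`.) -/
abbrev Rr (r : ℕ) : Type := AddMonoidAlgebra (ZMod 2) (ZMod r)

/-- The monomial `xᵃ`. -/
def mono {r : ℕ} (a : ZMod r) : Rr r := AddMonoidAlgebra.single a 1

/-- Weight of an element of `Rr r`: the number of nonzero coefficients. -/
def wt {r : ℕ} (p : Rr r) : ℕ := p.coeff.support.card

/-- Square submatrix of `H` given by the columns in `T`. -/
def colSub {J L : ℕ} {R : Type*} (H : Matrix (Fin J) (Fin L) R) (T : Finset (Fin L))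
    (h : T.card = J) : Matrix (Fin J) (Fin J) R :=
  fun j k => H j (T.orderIsoOfFin h k)

/-- Square submatrix of `H` given by the columns in `S \ {i}` where `S` has `J+1` elements. -/
def eraseSub {J L : ℕ} {R : Type*} (H : Matrix (Fin J) (Fin L) R) (S : Finset (Fin L))
    (hS : S.card = J + 1) (i : Fin L) (hi : i ∈ S) : Matrix (Fin J) (Fin J) R :=
  colSub H (S.erase i) (by rw [Finset.card_erase_of_mem hi, hS]; rfl)

def isCodeword {r : ℕ} {ι κ : Type*} [Fintype κ] (H : Matrix ι κ (Rr r)) (c : κ → Rr r) : Prop :=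
  ∀ j, ∑ i, H j i * c i = 0

/-- Hamming weight of a vector over `Rr r`. -/
def wH {r : ℕ} {κ : Type*} [Fintype κ] (c : κ → Rr r) : ℕ := ∑ i, wt (c i)

/-- Minimum Hamming distance of the code with parity-check matrix `H`. -/
def dmin {r : ℕ} {ι κ : Type*} [Fintype κ] (H : Matrix ι κ (Rr r)) : ℕ :=
  sInf {w | ∃ c, isCodeword H c ∧ c ≠ 0 ∧ wH c = w}

/-! ### Auxiliary lemmas -/

section Aux

variable {r : ℕ}

lemma Rr.one_add_one : (1 : Rr r) + 1 = 0 := by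
  rw [AddMonoidAlgebra.one_def, ← AddMonoidAlgebra.single_add]
  have : (1 : ZMod 2) + 1 = 0 := by decide
  rw [this, AddMonoidAlgebra.single_zero]

lemma Rr.neg_one_eq_one : (-1 : Rr r) = 1 :=
  neg_eq_of_add_eq_zero_left Rr.one_add_one

lemma Rr.neg_eq (x : Rr r) : -x = x := by
  have : -x = (-1 : Rr r) * x := by ring
  rw [this, Rr.neg_one_eq_one, one_mul]

lemma Rr.add_self (x : Rr r) : x + x = 0 := by
  nth_rewrite 2 [← Rr.neg_eq x]
  exact add_neg_cancel x

lemma Rr.units_smul (u : ℤˣ) (x : Rr r) : u • x = x := by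
  rcases Int.units_eq_one_or u with h | h <;> subst h
  · simp
  · simp [Units.smul_def, Rr.neg_eq]

/-- Determinant over `Rr r` without signs (char 2). -/
lemma Rr.det_eq {m : ℕ} (M : Matrix (Fin m) (Fin m) (Rr r)) :
    M.det = ∑ σ : Equiv.Perm (Fin m), ∏ i, M (σ i) i := by
  rw [Matrix.det_apply]
  exact Finset.sum_congr rfl fun σ _ => Rr.units_smul _ _

lemma wt_zero : wt (0 : Rr r) = 0 := by simp [wt]

lemma wt_add_le (p q : Rr r) : wt (p + q) ≤ wt p + wt q :=
  (Finset.card_le_card Finsupp.support_add).trans (Finset.card_union_le _ _)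

lemma wt_sum_le {ι : Type*} (s : Finset ι) (f : ι → Rr r) :
    wt (∑ i ∈ s, f i) ≤ ∑ i ∈ s, wt (f i) := by
  classical
  induction s using Finset.cons_induction with
  | empty => simp [wt]
  | cons a s ha ih =>
      rw [Finset.sum_cons, Finset.sum_cons]
      exact (wt_add_le _ _).trans (by omega)

/-- "Is zero or a monomial". -/
def IsMon {r : ℕ} (x : Rr r) : Prop := x = 0 ∨ ∃ a, x = mono a

lemma IsMon.mul {x y : Rr r} (hx : IsMon x) (hy : IsMon y) : IsMon (x * y) := by
  rcases hx with rfl | ⟨a, rfl⟩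
  · exact Or.inl (by rw [zero_mul])
  rcases hy with rfl | ⟨b, rfl⟩
  · exact Or.inl (by rw [mul_zero])
  · refine Or.inr ⟨a + b, ?_⟩
    simp [mono, AddMonoidAlgebra.single_mul_single]

lemma isMon_one : IsMon (1 : Rr r) :=
  Or.inr ⟨0, by simp [mono, AddMonoidAlgebra.one_def]⟩

lemma IsMon.prod {ι : Type*} (s : Finset ι) (f : ι → Rr r) (h : ∀ i ∈ s, IsMon (f i)) :
    IsMon (∏ i ∈ s, f i) :=
  Finset.prod_induction f IsMon (fun _ _ => IsMon.mul) isMon_one h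

lemma IsMon.wt_le {x : Rr r} (h : IsMon x) : wt x ≤ 1 := by
  rcases h with rfl | ⟨a, rfl⟩
  · simp [wt]
  · rw [wt, mono, AddMonoidAlgebra.coeff_single, Finsupp.support_single_ne_zero a one_ne_zero]
    simp

/-- Generic determinant weight bound. -/
lemma wt_det_le {m : ℕ} (M : Matrix (Fin m) (Fin m) (Rr r)) (hM : ∀ p q, IsMon (M p q)) :
    wt M.det ≤ m.factorial := by
  rw [Rr.det_eq]
  refine (wt_sum_le _ _).trans ?_
  calc ∑ σ : Equiv.Perm (Fin m), wt (∏ i, M (σ i) i)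
      ≤ ∑ _σ : Equiv.Perm (Fin m), 1 :=
        Finset.sum_le_sum fun σ _ => (IsMon.prod _ _ fun i _ => hM _ _).wt_le
    _ = Fintype.card (Equiv.Perm (Fin m)) := by simp
    _ = m.factorial := by simp [Fintype.card_perm]

/-- Any two triples of distinct elements are related by a permutation. -/
lemma exists_perm_three {α : Type*} [DecidableEq α] (a1 a2 a3 b1 b2 b3 : α)
    (ha12 : a1 ≠ a2) (ha13 : a1 ≠ a3) (ha23 : a2 ≠ a3)
    (hb12 : b1 ≠ b2) (hb13 : b1 ≠ b3) (hb23 : b2 ≠ b3) :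
    ∃ σ : Equiv.Perm α, σ a1 = b1 ∧ σ a2 = b2 ∧ σ a3 = b3 := by
  set τ1 := Equiv.swap a1 b1 with hτ1
  have h1 : τ1 a1 = b1 := Equiv.swap_apply_left _ _
  have hb1a2 : b1 ≠ τ1 a2 := by
    rw [← h1]; exact fun h => ha12 (τ1.injective h)
  set τ2 := Equiv.swap (τ1 a2) b2 with hτ2
  have h2 : τ2 (τ1 a2) = b2 := Equiv.swap_apply_left _ _
  have hτ2b1 : τ2 b1 = b1 := Equiv.swap_apply_of_ne_of_ne hb1a2 hb12
  have hb1a3 : b1 ≠ τ2 (τ1 a3) := by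
    rw [← hτ2b1, ← h1]; exact fun h => ha13 (τ1.injective (τ2.injective h))
  have hb2a3 : b2 ≠ τ2 (τ1 a3) := by
    rw [← h2]; exact fun h => ha23 (τ1.injective (τ2.injective h))
  set τ3 := Equiv.swap (τ2 (τ1 a3)) b3 with hτ3
  refine ⟨τ3 * τ2 * τ1, ?_, ?_, ?_⟩
  · show τ3 (τ2 (τ1 a1)) = b1
    rw [h1, hτ2b1]
    exact Equiv.swap_apply_of_ne_of_ne hb1a3 hb13
  · show τ3 (τ2 (τ1 a2)) = b2
    rw [h2]
    exact Equiv.swap_apply_of_ne_of_ne hb2a3 hb23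
  · show τ3 (τ2 (τ1 a3)) = b3
    exact Equiv.swap_apply_left _ _

/-- Count lower bound for permutations with three prescribed values. -/
lemma perm_filter_card_ge {m : ℕ} (c1 c2 c3 v1 v2 v3 : Fin m)
    (hc12 : c1 ≠ c2) (hc13 : c1 ≠ c3) (hc23 : c2 ≠ c3)
    (hv12 : v1 ≠ v2) (hv13 : v1 ≠ v3) (hv23 : v2 ≠ v3) :
    (m - 3).factorial ≤
      (Finset.univ.filter fun σ : Equiv.Perm (Fin m) =>
        σ c1 = v1 ∧ σ c2 = v2 ∧ σ c3 = v3).card := by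
  classical
  obtain ⟨σ₀, h1, h2, h3⟩ := exists_perm_three c1 c2 c3 v1 v2 v3 hc12 hc13 hc23 hv12 hv13 hv23
  set s : Finset (Fin m) := {c1, c2, c3} with hs
  have hscard : s.card = 3 := by
    rw [hs, Finset.card_insert_of_notMem (by simp [hc12, hc13]),
      Finset.card_insert_of_notMem (by simp [hc23]), Finset.card_singleton]
  have hofs : Function.Injective
      (Equiv.Perm.ofSubtype : Equiv.Perm {x : Fin m // x ∉ s} → Equiv.Perm (Fin m)) := by
    intro π π' h
    ext x
    have h2 : Equiv.Perm.ofSubtype π ↑x = Equiv.Perm.ofSubtype π' ↑x := by rw [h]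
    rw [Equiv.Perm.ofSubtype_apply_coe, Equiv.Perm.ofSubtype_apply_coe] at h2
    have h3 := Subtype.coe_injective h2
    rw [h3]
  have hF : ∀ π : Equiv.Perm {x : Fin m // x ∉ s},
      (σ₀ * Equiv.Perm.ofSubtype π) ∈ (Finset.univ.filter fun σ : Equiv.Perm (Fin m) =>
        σ c1 = v1 ∧ σ c2 = v2 ∧ σ c3 = v3) := by
    intro π
    simp only [Finset.mem_filter, Finset.mem_univ, true_and]
    refine ⟨?_, ?_, ?_⟩
    · rw [Equiv.Perm.mul_apply,
        Equiv.Perm.ofSubtype_apply_of_not_mem π (by simp [hs] : ¬ c1 ∉ s), h1]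
    · rw [Equiv.Perm.mul_apply,
        Equiv.Perm.ofSubtype_apply_of_not_mem π (by simp [hs] : ¬ c2 ∉ s), h2]
    · rw [Equiv.Perm.mul_apply,
        Equiv.Perm.ofSubtype_apply_of_not_mem π (by simp [hs] : ¬ c3 ∉ s), h3]
  have hcard : Fintype.card {x : Fin m // x ∉ s} = m - 3 := by
    have hc : Fintype.card {x : Fin m // x ∈ s} = 3 := by
      rw [Fintype.card_of_subtype s (fun x => Iff.rfl), hscard]
    rw [Fintype.card_subtype_compl, hc, Fintype.card_fin]
  calc (m - 3).factorial = Fintype.card (Equiv.Perm {x : Fin m // x ∉ s}) := by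
        rw [Fintype.card_perm, hcard]
    _ = (Finset.univ : Finset (Equiv.Perm {x : Fin m // x ∉ s})).card := Finset.card_univ.symm
    _ ≤ _ := Finset.card_le_card_of_injOn (fun π => σ₀ * Equiv.Perm.ofSubtype π)
        (fun π _ => hF π) (fun π _ π' _ h => hofs (mul_left_cancel h))

/-- The 6-cycle cancellation bound for determinants. -/
lemma wt_det_le_of_rel {m : ℕ} (M : Matrix (Fin m) (Fin m) (Rr r))
    (hM : ∀ p q, IsMon (M p q)) (r1 r2 r3 c1 c2 c3 : Fin m)
    (hr12 : r1 ≠ r2) (hr13 : r1 ≠ r3) (hr23 : r2 ≠ r3)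
    (hc12 : c1 ≠ c2) (hc13 : c1 ≠ c3) (hc23 : c2 ≠ c3)
    (hrel : M r1 c1 * M r2 c2 * M r3 c3 = M r1 c2 * M r2 c3 * M r3 c1) :
    wt M.det ≤ m.factorial - 2 * (m - 3).factorial := by
  classical
  set t : Equiv.Perm (Fin m) → Rr r := fun σ => ∏ i, M (σ i) i with ht
  set P := Finset.univ.filter fun σ : Equiv.Perm (Fin m) =>
      σ c1 = r1 ∧ σ c2 = r2 ∧ σ c3 = r3 with hP
  set Q := Finset.univ.filter fun σ : Equiv.Perm (Fin m) =>
      σ c1 = r3 ∧ σ c2 = r1 ∧ σ c3 = r2 with hQ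
  have hdisj : Disjoint P Q := by
    rw [Finset.disjoint_left]
    intro σ hσP hσQ
    rw [hP, Finset.mem_filter] at hσP
    rw [hQ, Finset.mem_filter] at hσQ
    exact hr13 (hσP.2.1 ▸ hσQ.2.1 ▸ rfl)
  set g : Equiv.Perm (Fin m) := Equiv.swap c1 c2 * Equiv.swap c1 c3 with hg
  have hg1 : g c1 = c3 := by
    rw [hg, Equiv.Perm.mul_apply, Equiv.swap_apply_left,
      Equiv.swap_apply_of_ne_of_ne (Ne.symm hc13) (Ne.symm hc23)]
  have hg2 : g c2 = c1 := by
    rw [hg, Equiv.Perm.mul_apply,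
      Equiv.swap_apply_of_ne_of_ne (Ne.symm hc12) hc23, Equiv.swap_apply_right]
  have hg3 : g c3 = c2 := by
    rw [hg, Equiv.Perm.mul_apply, Equiv.swap_apply_right, Equiv.swap_apply_left]
  have hgo : ∀ x, x ≠ c1 → x ≠ c2 → x ≠ c3 → g x = x := by
    intro x hx1 hx2 hx3
    rw [hg, Equiv.Perm.mul_apply, Equiv.swap_apply_of_ne_of_ne hx1 hx3,
      Equiv.swap_apply_of_ne_of_ne hx1 hx2]
  have hginv1 : g⁻¹ c1 = c2 := by rw [← hg2]; simp
  have hginv2 : g⁻¹ c2 = c3 := by rw [← hg3]; simp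
  have hginv3 : g⁻¹ c3 = c1 := by rw [← hg1]; simp
  set s : Finset (Fin m) := {c1, c2, c3} with hs
  have hsplit : ∀ f : Fin m → Rr r,
      ∏ i, f i = (f c1 * (f c2 * f c3)) * ∏ i ∈ sᶜ, f i := by
    intro f
    rw [← Finset.prod_mul_prod_compl s f]
    congr 1
    rw [hs, Finset.prod_insert (by simp [hc12, hc13]),
      Finset.prod_insert (by simp [hc23]), Finset.prod_singleton]
  have hteq : ∀ σ ∈ P, t σ = t (σ * g) := by
    intro σ hσ
    rw [hP, Finset.mem_filter] at hσ
    obtain ⟨-, h1, h2, h3⟩ := hσ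
    have hmg : ∀ i, (σ * g) i = σ (g i) := fun i => rfl
    rw [ht]
    simp only [hmg]
    rw [hsplit (fun i => M (σ i) i), hsplit (fun i => M (σ (g i)) i)]
    have hrest : ∏ i ∈ sᶜ, M (σ (g i)) i = ∏ i ∈ sᶜ, M (σ i) i := by
      refine Finset.prod_congr rfl fun i hi => ?_
      rw [Finset.mem_compl, hs] at hi
      simp only [Finset.mem_insert, Finset.mem_singleton, not_or] at hi
      rw [hgo i hi.1 hi.2.1 hi.2.2]
    rw [hrest]
    congr 1
    rw [hg1, hg2, hg3, h1, h2, h3]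
    linear_combination hrel
  have hQP : ∑ σ ∈ Q, t σ = ∑ σ ∈ P, t σ := by
    refine Finset.sum_bij' (fun σ _ => σ * g⁻¹) (fun σ _ => σ * g) ?_ ?_ ?_ ?_ ?_
    · intro σ hσ
      rw [hQ, Finset.mem_filter] at hσ
      obtain ⟨-, h1, h2, h3⟩ := hσ
      rw [hP, Finset.mem_filter]
      refine ⟨Finset.mem_univ _, ?_, ?_, ?_⟩ <;>
        simp only [Equiv.Perm.mul_apply]
      · rw [hginv1, h2]
      · rw [hginv2, h3]
      · rw [hginv3, h1]
    · intro σ hσ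
      rw [hP, Finset.mem_filter] at hσ
      obtain ⟨-, h1, h2, h3⟩ := hσ
      rw [hQ, Finset.mem_filter]
      refine ⟨Finset.mem_univ _, ?_, ?_, ?_⟩ <;>
        simp only [Equiv.Perm.mul_apply]
      · rw [hg1, h3]
      · rw [hg2, h1]
      · rw [hg3, h2]
    · intro σ _; group
    · intro σ _; group
    · intro σ hσ
      have hmem : σ * g⁻¹ ∈ P := by
        rw [hQ, Finset.mem_filter] at hσ
        obtain ⟨-, h1, h2, h3⟩ := hσ
        rw [hP, Finset.mem_filter]
        refine ⟨Finset.mem_univ _, ?_, ?_, ?_⟩ <;>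
          simp only [Equiv.Perm.mul_apply]
        · rw [hginv1, h2]
        · rw [hginv2, h3]
        · rw [hginv3, h1]
      have h5 := hteq _ hmem
      rw [show σ * g⁻¹ * g = σ by group] at h5
      exact h5.symm
  have hPQ0 : ∑ σ ∈ P ∪ Q, t σ = 0 := by
    rw [Finset.sum_union hdisj, hQP, Rr.add_self]
  have hdet : M.det = ∑ σ ∈ (P ∪ Q)ᶜ, t σ := by
    rw [Rr.det_eq, ← Finset.sum_add_sum_compl (P ∪ Q) t, hPQ0, zero_add]
  have hPcard : (m - 3).factorial ≤ P.card :=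
    perm_filter_card_ge c1 c2 c3 r1 r2 r3 hc12 hc13 hc23 hr12 hr13 hr23
  have hQcard : (m - 3).factorial ≤ Q.card :=
    perm_filter_card_ge c1 c2 c3 r3 r1 r2 hc12 hc13 hc23 (Ne.symm hr13) (Ne.symm hr23) hr12
  have hunion : P.card + Q.card = (P ∪ Q).card := (Finset.card_union_of_disjoint hdisj).symm
  have hcardcompl : (P ∪ Q)ᶜ.card = m.factorial - (P ∪ Q).card := by
    rw [Finset.card_compl, Fintype.card_perm, Fintype.card_fin]
  calc wt M.det ≤ ∑ σ ∈ (P ∪ Q)ᶜ, wt (t σ) := by rw [hdet]; exact wt_sum_le _ _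
    _ ≤ ∑ _σ ∈ (P ∪ Q)ᶜ, 1 :=
        Finset.sum_le_sum fun σ _ => (IsMon.prod _ _ fun i _ => hM _ _).wt_le
    _ = (P ∪ Q)ᶜ.card := by simp
    _ ≤ m.factorial - 2 * (m - 3).factorial := by
        rw [hcardcompl]
        omega

/-- Injectivity of `Fin.snoc`. -/
lemma snoc_inj {n : ℕ} {α : Type*} {f : Fin n → α} {x : α}
    (hf : Function.Injective f) (hx : ∀ a, f a ≠ x) :
    Function.Injective (Fin.snoc f x : Fin (n + 1) → α) := by
  intro a b h
  rcases Fin.eq_castSucc_or_eq_last a with ⟨a', rfl⟩ | rfl <;>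
    rcases Fin.eq_castSucc_or_eq_last b with ⟨b', rfl⟩ | rfl
  · rw [Fin.snoc_castSucc, Fin.snoc_castSucc] at h
    rw [hf h]
  · rw [Fin.snoc_castSucc, Fin.snoc_last] at h
    exact absurd h (hx a')
  · rw [Fin.snoc_castSucc, Fin.snoc_last] at h
    exact absurd h.symm (hx b')
  · rfl

/-- The cofactor construction. -/
lemma cofactor_codeword {r J L n : ℕ} (H : Matrix (Fin J) (Fin L) (Rr r))
    (w : Fin n → Fin J) (v : Fin (n + 1) → Fin L)
    (hw : Function.Injective w) (hv : Function.Injective v)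
    (hrow : ∀ j, (∀ p, w p ≠ j) → (H.submatrix (Fin.cons j w) v).det = 0) :
    ∃ c : Fin L → Rr r, isCodeword H c ∧
      (∀ k, c (v k) = (H.submatrix w (v ∘ Fin.succAbove k)).det) ∧
      wH c = ∑ k, wt ((H.submatrix w (v ∘ Fin.succAbove k)).det) := by
  classical
  set D : Fin (n + 1) → Rr r := fun k => (H.submatrix w (v ∘ Fin.succAbove k)).det with hD
  set c : Fin L → Rr r := fun i => ∑ k, if v k = i then D k else 0 with hc
  have hcv : ∀ k, c (v k) = D k := by
    intro k
    rw [hc]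
    simp only [hv.eq_iff]
    rw [Finset.sum_ite_eq' Finset.univ k D]
    simp
  have hc0 : ∀ i, (∀ k, v k ≠ i) → c i = 0 := by
    intro i hi
    rw [hc]
    exact Finset.sum_eq_zero fun k _ => if_neg (hi k)
  refine ⟨c, ?_, hcv, ?_⟩
  · -- codeword property
    intro j
    have hstep : ∑ i, H j i * c i = ∑ k, H j (v k) * D k := by
      calc ∑ i, H j i * c i = ∑ i, ∑ k, if v k = i then H j i * D k else 0 := by
            refine Finset.sum_congr rfl fun i _ => ?_
            rw [hc, Finset.mul_sum]
            exact Finset.sum_congr rfl fun k _ => by rw [mul_ite, mul_zero]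
        _ = ∑ k, ∑ i, if v k = i then H j i * D k else 0 := Finset.sum_comm
        _ = ∑ k, H j (v k) * D k := by
            refine Finset.sum_congr rfl fun k _ => ?_
            rw [Finset.sum_ite_eq Finset.univ (v k) (fun i => H j i * D k)]
            simp
    rw [hstep]
    set B : Matrix (Fin (n + 1)) (Fin (n + 1)) (Rr r) :=
      Matrix.of (Fin.cons (fun q => H j (v q)) (fun p q => H (w p) (v q))) with hB
    have hBsub : ∀ k : Fin (n + 1),
        B.submatrix Fin.succ k.succAbove = H.submatrix w (v ∘ Fin.succAbove k) := by
      intro k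
      ext p q
      simp [hB, Fin.cons_succ]
    have hBdet : B.det = ∑ k, H j (v k) * D k := by
      rw [Matrix.det_succ_row_zero]
      refine Finset.sum_congr rfl fun k _ => ?_
      have hpow : ((-1 : Rr r)) ^ (k : ℕ) = 1 := by rw [Rr.neg_one_eq_one, one_pow]
      rw [hpow, one_mul, hBsub k]
      have hB0 : B 0 k = H j (v k) := by simp [hB]
      rw [hB0, hD]
    rw [← hBdet]
    by_cases hj : ∃ p, w p = j
    · obtain ⟨p, rfl⟩ := hj
      refine Matrix.det_zero_of_row_eq (i := 0) (j := p.succ) (Fin.succ_ne_zero p).symm ?_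
      funext q
      simp [hB, Fin.cons_succ]
    · push_neg at hj
      have hBeq : B = H.submatrix (Fin.cons j w) v := by
        ext p q
        refine Fin.cases ?_ (fun p' => ?_) p <;> simp [hB, Fin.cons_succ]
      rw [hBeq]
      exact hrow j hj
  · -- weight
    rw [wH]
    have hoff : ∀ i ∈ Finset.univ, i ∉ Finset.univ.image v → wt (c i) = 0 := by
      intro i _ hi
      rw [hc0 i (fun k hk => hi (Finset.mem_image.mpr ⟨k, Finset.mem_univ k, hk⟩)), wt_zero]
    rw [← Finset.sum_subset (Finset.subset_univ (Finset.univ.image v)) hoff]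
    rw [Finset.sum_image (fun a _ b _ h => hv h)]
    exact Finset.sum_congr rfl fun k _ => by rw [hcv k]

end Aux

/-- a 6-cycle condition in a type-I code lowers the bound. -/
theorem typeI_six_cycle_dmin {r J L : ℕ} (hr : 0 < r) (hJ : 3 ≤ J) (hJL : J + 1 ≤ L)
    (H : Matrix (Fin J) (Fin L) (Rr r))
    (htypeI : ∀ j i, H j i = 0 ∨ ∃ a, H j i = mono a)
    (j1 j2 j3 : Fin J) (i1 i2 i3 : Fin L)
    (hj12 : j1 ≠ j2) (hj13 : j1 ≠ j3) (hj23 : j2 ≠ j3)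
    (hi12 : i1 ≠ i2) (hi13 : i1 ≠ i3) (hi23 : i2 ≠ i3)
    (hcyc : H j1 i1 * H j2 i2 * H j3 i3 = H j1 i2 * H j2 i3 * H j3 i1)
    (hnz : H j1 i1 * H j2 i2 * H j3 i3 ≠ 0) :
    dmin H ≤ Nat.factorial (J + 1) - 2 * Nat.factorial (J - 2) := by
  classical
  have hH1 : H j1 i1 ≠ 0 := fun h => hnz (by rw [h, zero_mul, zero_mul])
  -- a set S of J+1 columns containing i1, i2, i3, enumerated by u
  have hcard3 : ({i1, i2, i3} : Finset (Fin L)).card = 3 := by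
    rw [Finset.card_insert_of_notMem (by simp [hi12, hi13]),
      Finset.card_insert_of_notMem (by simp [hi23]), Finset.card_singleton]
  obtain ⟨S, hsub, -, hScard⟩ :=
    Finset.exists_subsuperset_card_eq (Finset.subset_univ ({i1, i2, i3} : Finset (Fin L)))
      (by omega : ({i1, i2, i3} : Finset (Fin L)).card ≤ J + 1)
      (by simpa using hJL)
  set u : Fin (J + 1) → Fin L := fun k => ((S.orderIsoOfFin hScard k : Fin L)) with hu
  have hu_inj : Function.Injective u :=
    fun a b h => (S.orderIsoOfFin hScard).injective (Subtype.ext h)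
  have hu_mem : ∀ i ∈ S, ∃ k, u k = i := fun i hi =>
    ⟨(S.orderIsoOfFin hScard).symm ⟨i, hi⟩, by
      rw [hu]
      exact congrArg Subtype.val ((S.orderIsoOfFin hScard).apply_symm_apply ⟨i, hi⟩)⟩
  obtain ⟨k1, hk1⟩ := hu_mem i1 (hsub (by simp))
  obtain ⟨k2, hk2⟩ := hu_mem i2 (hsub (by simp))
  obtain ⟨k3, hk3⟩ := hu_mem i3 (hsub (by simp))
  -- the Good predicate
  set Good : ℕ → Prop := fun n => ∃ w : Fin n → Fin J, ∃ z : Fin n → Fin (J + 1),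
    Function.Injective w ∧ Function.Injective z ∧
      (H.submatrix w (u ∘ z)).det ≠ 0 with hGoodDef
  have good1 : Good 1 := by
    refine ⟨fun _ => j1, fun _ => k1, fun a b _ => Subsingleton.elim a b,
      fun a b _ => Subsingleton.elim a b, ?_⟩
    rw [Matrix.det_fin_one]
    simpa [Matrix.submatrix_apply, hk1] using hH1
  have h1J : 1 ≤ J := by omega
  obtain ⟨n, hn1, hnJ, hGn, hmax⟩ :
      ∃ n, 1 ≤ n ∧ n ≤ J ∧ Good n ∧ ∀ m, n < m → m ≤ J → ¬Good m :=
    ⟨Nat.findGreatest Good J, Nat.le_findGreatest h1J good1, Nat.findGreatest_le J,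
      Nat.findGreatest_spec h1J good1, fun m h1 h2 => Nat.findGreatest_is_greatest h1 h2⟩
  obtain ⟨w, z, hw, hz, hdet⟩ := hGn
  -- extend z by an unused index k0
  have hznsurj : ¬Function.Surjective z := by
    intro hs
    have := Fintype.card_le_of_surjective z hs
    simp only [Fintype.card_fin] at this
    omega
  obtain ⟨k0, hk0⟩ : ∃ k0, ∀ a, z a ≠ k0 := by
    by_contra h
    push_neg at h
    exact hznsurj fun k => h k
  obtain ⟨zt, hzt_inj, hzt_cast, hzt_last⟩ :
      ∃ zt : Fin (n + 1) → Fin (J + 1), Function.Injective zt ∧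
        (∀ a, zt (Fin.castSucc a) = z a) ∧ zt (Fin.last n) = k0 :=
    ⟨Fin.snoc z k0, snoc_inj hz hk0, fun a => by simp, by simp⟩
  have hv : Function.Injective (u ∘ zt) := hu_inj.comp hzt_inj
  -- if n = J then w is surjective
  have hwsurj : n = J → Function.Surjective w := by
    intro hnJ'
    refine ((Fintype.bijective_iff_injective_and_card w).mpr ⟨hw, ?_⟩).surjective
    simp [hnJ']
  -- the border-determinant vanishing (maximality)
  have hrow : ∀ j, (∀ p, w p ≠ j) → (H.submatrix (Fin.cons j w) (u ∘ zt)).det = 0 := by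
    intro j hj
    by_contra hne
    have hltJ : n < J := by
      rcases Nat.lt_or_ge n J with h | h
      · exact h
      · exfalso
        obtain ⟨p, hp⟩ := hwsurj (by omega) j
        exact hj p hp
    have hjr : j ∉ Set.range w := by
      rintro ⟨p, hp⟩; exact hj p hp
    exact hmax (n + 1) (by omega) (by omega)
      ⟨Fin.cons j w, zt, Fin.cons_injective_of_injective hjr hw, hzt_inj, hne⟩
  obtain ⟨c, hcode, hcv, hwHc⟩ := cofactor_codeword H w (u ∘ zt) hw hv hrow
  -- nonzero
  have hDlast : (H.submatrix w ((u ∘ zt) ∘ Fin.succAbove (Fin.last n))).det ≠ 0 := by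
    have heq : (u ∘ zt) ∘ Fin.succAbove (Fin.last n) = u ∘ z := by
      funext a
      simp [Fin.succAbove_last, hzt_cast]
    rw [heq]
    exact hdet
  have hcne : c ≠ 0 := by
    intro h
    apply hDlast
    rw [← hcv (Fin.last n), h]
    rfl
  have hdle : dmin H ≤ wH c := Nat.sInf_le ⟨c, hcode, hcne, rfl⟩
  refine hdle.trans ?_
  rw [hwHc]
  have hentries : ∀ (k : Fin (n + 1)) p q,
      IsMon ((H.submatrix w ((u ∘ zt) ∘ Fin.succAbove k)) p q) := fun k p q => htypeI _ _
  have hgen : ∀ k, wt ((H.submatrix w ((u ∘ zt) ∘ Fin.succAbove k)).det) ≤ n.factorial :=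
    fun k => wt_det_le _ (hentries k)
  rcases Nat.lt_or_ge n J with hlt | hge
  · -- n < J : generic bound suffices
    have harith : J.factorial + 2 * (J - 2).factorial ≤ (J + 1).factorial := by
      have h1 : (J - 2).factorial ≤ J.factorial := Nat.factorial_le (by omega)
      have h2 : (J + 1).factorial = (J + 1) * J.factorial := Nat.factorial_succ J
      have h3 : 3 * J.factorial ≤ (J + 1) * J.factorial :=
        Nat.mul_le_mul_right _ (by omega)
      omega
    calc ∑ k, wt ((H.submatrix w ((u ∘ zt) ∘ Fin.succAbove k)).det)
        ≤ ∑ _k : Fin (n + 1), n.factorial := Finset.sum_le_sum fun k _ => hgen k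
      _ = (n + 1) * n.factorial := by
          rw [Finset.sum_const, Finset.card_univ, Fintype.card_fin, smul_eq_mul]
      _ = (n + 1).factorial := (Nat.factorial_succ n).symm
      _ ≤ J.factorial := Nat.factorial_le (by omega)
      _ ≤ (J + 1).factorial - 2 * (J - 2).factorial := by omega
  · -- n = J : use the cancellation
    have heq : n = J := by omega
    subst heq
    -- w and zt are surjective
    have hws : Function.Surjective w := hwsurj rfl
    have hzts : Function.Surjective zt :=
      ((Fintype.bijective_iff_injective_and_card zt).mpr ⟨hzt_inj, rfl⟩).surjective
    obtain ⟨ρ1, hρ1⟩ := hws j1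
    obtain ⟨ρ2, hρ2⟩ := hws j2
    obtain ⟨ρ3, hρ3⟩ := hws j3
    have hρ12 : ρ1 ≠ ρ2 := fun h => hj12 (by rw [← hρ1, ← hρ2, h])
    have hρ13 : ρ1 ≠ ρ3 := fun h => hj13 (by rw [← hρ1, ← hρ3, h])
    have hρ23 : ρ2 ≠ ρ3 := fun h => hj23 (by rw [← hρ2, ← hρ3, h])
    obtain ⟨x1, hx1⟩ := hzts k1
    obtain ⟨x2, hx2⟩ := hzts k2
    obtain ⟨x3, hx3⟩ := hzts k3
    have hv1 : (u ∘ zt) x1 = i1 := by simp [hx1, hk1]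
    have hv2 : (u ∘ zt) x2 = i2 := by simp [hx2, hk2]
    have hv3 : (u ∘ zt) x3 = i3 := by simp [hx3, hk3]
    have hx12 : x1 ≠ x2 := fun h => hi12 (by rw [← hv1, ← hv2, h])
    have hx13 : x1 ≠ x3 := fun h => hi13 (by rw [← hv1, ← hv3, h])
    have hx23 : x2 ≠ x3 := fun h => hi23 (by rw [← hv2, ← hv3, h])
    set s : Finset (Fin (n + 1)) := {x1, x2, x3} with hsdef
    have hscard : s.card = 3 := by
      rw [hsdef, Finset.card_insert_of_notMem (by simp [hx12, hx13]),
        Finset.card_insert_of_notMem (by simp [hx23]), Finset.card_singleton]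
    have hbetter : ∀ k, k ∉ s →
        wt ((H.submatrix w ((u ∘ zt) ∘ Fin.succAbove k)).det) ≤
          n.factorial - 2 * (n - 3).factorial := by
      intro k hk
      rw [hsdef] at hk
      simp only [Finset.mem_insert, Finset.mem_singleton, not_or] at hk
      obtain ⟨hk1', hk2', hk3'⟩ := hk
      obtain ⟨γ1, hγ1⟩ := Fin.exists_succAbove_eq (Ne.symm hk1')
      obtain ⟨γ2, hγ2⟩ := Fin.exists_succAbove_eq (Ne.symm hk2')
      obtain ⟨γ3, hγ3⟩ := Fin.exists_succAbove_eq (Ne.symm hk3')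
      have hγ12 : γ1 ≠ γ2 := fun h => hx12 (by rw [← hγ1, ← hγ2, h])
      have hγ13 : γ1 ≠ γ3 := fun h => hx13 (by rw [← hγ1, ← hγ3, h])
      have hγ23 : γ2 ≠ γ3 := fun h => hx23 (by rw [← hγ2, ← hγ3, h])
      refine wt_det_le_of_rel _ (hentries k) ρ1 ρ2 ρ3 γ1 γ2 γ3
        hρ12 hρ13 hρ23 hγ12 hγ13 hγ23 ?_
      simp only [Matrix.submatrix_apply, Function.comp_apply, hρ1, hρ2, hρ3,
        hγ1, hγ2, hγ3]
      have e1 : u (zt x1) = i1 := hv1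
      have e2 : u (zt x2) = i2 := hv2
      have e3 : u (zt x3) = i3 := hv3
      rw [e1, e2, e3]
      exact hcyc
    -- sum the bounds
    have hsum : ∑ k, wt ((H.submatrix w ((u ∘ zt) ∘ Fin.succAbove k)).det) ≤
        3 * n.factorial + (n - 2) * (n.factorial - 2 * (n - 3).factorial) := by
      calc ∑ k, wt ((H.submatrix w ((u ∘ zt) ∘ Fin.succAbove k)).det)
          ≤ ∑ k, (if k ∈ s then n.factorial else n.factorial - 2 * (n - 3).factorial) := by
            refine Finset.sum_le_sum fun k _ => ?_
            by_cases h : k ∈ s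
            · rw [if_pos h]; exact hgen k
            · rw [if_neg h]; exact hbetter k h
        _ = ∑ k ∈ Finset.univ.filter (· ∈ s), n.factorial +
            ∑ k ∈ Finset.univ.filter (¬ · ∈ s), (n.factorial - 2 * (n - 3).factorial) :=
            Finset.sum_ite _ _
        _ = 3 * n.factorial + (n - 2) * (n.factorial - 2 * (n - 3).factorial) := by
            rw [Finset.sum_const, Finset.sum_const]
            have hfe : Finset.univ.filter (· ∈ s) = s := by
              rw [Finset.filter_mem_eq_inter, Finset.univ_inter]
            have hfne : (Finset.univ.filter (¬ · ∈ s)).card = n + 1 - 3 := by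
              have : Finset.univ.filter (¬ · ∈ s) = Finset.univ \ s := by
                rw [Finset.sdiff_eq_filter]
              rw [this, Finset.card_sdiff_of_subset (Finset.subset_univ s), Finset.card_univ,
                Fintype.card_fin, hscard]
            rw [hfe, hscard, hfne, smul_eq_mul, smul_eq_mul]
            have h32 : n + 1 - 3 = n - 2 := by omega
            rw [h32]
    refine hsum.trans ?_
    -- final arithmetic, n = J
    have h2b : 2 * (n - 3).factorial ≤ n.factorial := by
      have ha : (n - 3).factorial ≤ (n - 1).factorial := Nat.factorial_le (by omega)
      have hb : n.factorial = ((n - 1) + 1) * (n - 1).factorial := by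
        rw [← Nat.factorial_succ]
        congr 1
        omega
      have hc : 2 * (n - 1).factorial ≤ ((n - 1) + 1) * (n - 1).factorial :=
        Nat.mul_le_mul_right _ (by omega)
      omega
    have e2 : (n - 2).factorial = (n - 2) * (n - 3).factorial := by
      have h : n - 2 = (n - 3) + 1 := by omega
      rw [h, Nat.factorial_succ]
    have e1 : (n + 1).factorial = (n + 1) * n.factorial := Nat.factorial_succ n
    have hsplit5 : (n + 1) * n.factorial = 3 * n.factorial + (n - 2) * n.factorial := by
      have h : n + 1 = 3 + (n - 2) := by omega
      rw [h, Nat.add_mul]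
    have hd : (n - 2) * (n.factorial - 2 * (n - 3).factorial) + (n - 2) * (2 * (n - 3).factorial)
        = (n - 2) * n.factorial := by
      rw [← Nat.mul_add]
      congr 1
      omega
    have hq : (n - 2) * (2 * (n - 3).factorial) = 2 * ((n - 2) * (n - 3).factorial) := by ring
    rw [hq] at hd
    rw [e1, e2]
    omega
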